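/- Let n >= 4 be an even integer. Consider the fair-chores instance with n agents and n + 1 chores e_1, ..., e_{n+1} where: agent 1 has v_1(e_j) = -2/n^2 for 1 <= j <= n and v_1(e_{n+1}) = -(n-2)/n; and every agent i >= 2 has v_i(e_j) = -1/(n+1) for all j. Then OPT_U >= -(3n+2)/(n(n+1)), while every connected PROP1 allocation A satisfies UW(A) <= -n/(2(n+1)) - (n+2)/n^2. Hence the price of PROP1 with respect to utilitarian welfare for chores is Omega(n). -/

import Mathlib

open Finset

noncomputable section

/-- The value of a bundle `S` of items under additive (item-level) valuation `v`. -/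
def bundleVal {m : ℕ} (v : Fin m → ℝ) (S : Finset (Fin m)) : ℝ := ∑ e ∈ S, v e

/-- A bundle is connected if it is an interval of the line `e_1, …, e_m`. -/
def IsConnBundle {m : ℕ} (S : Finset (Fin m)) : Prop :=
  ∀ a ∈ S, ∀ c ∈ S, ∀ b : Fin m, a ≤ b → b ≤ c → b ∈ S

/-- A connected allocation: pairwise disjoint connected bundles covering all items. -/
def ConnAlloc (n m : ℕ) (A : Fin n → Finset (Fin m)) : Prop :=
  (∀ i, IsConnBundle (A i)) ∧
  (∀ i j : Fin n, i ≠ j → Disjoint (A i) (A j)) ∧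
  (∀ e : Fin m, ∃ i, e ∈ A i)

/-- The maximin share of an agent with valuation `v`: the maximum over connected
`n`-partitions of the minimum bundle value. -/
def mmsVal (n m : ℕ) (v : Fin m → ℝ) : ℝ :=
  sSup { x : ℝ | ∃ A : Fin n → Finset (Fin m), ConnAlloc n m A ∧ x = ⨅ j, bundleVal v (A j) }

/-- Utilitarian welfare of an allocation. -/
def utilW (n m : ℕ) (v : Fin n → Fin m → ℝ) (A : Fin n → Finset (Fin m)) : ℝ :=
  ∑ i, bundleVal (v i) (A i)

/-- Egalitarian welfare of an allocation. -/
def egalW (n m : ℕ) (v : Fin n → Fin m → ℝ) (A : Fin n → Finset (Fin m)) : ℝ :=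
  ⨅ i, bundleVal (v i) (A i)

/-- Optimal utilitarian welfare over all connected allocations. -/
def optU (n m : ℕ) (v : Fin n → Fin m → ℝ) : ℝ :=
  sSup { x : ℝ | ∃ A, ConnAlloc n m A ∧ x = utilW n m v A }

/-- Optimal egalitarian welfare over all connected allocations. -/
def optE (n m : ℕ) (v : Fin n → Fin m → ℝ) : ℝ :=
  sSup { x : ℝ | ∃ A, ConnAlloc n m A ∧ x = egalW n m v A }

/-- A connected allocation of chores is PROP1 if every agent's bundle is either empty or
contains an item whose removal keeps the bundle connected and brings the agent's value
up to at least `-1/n`. -/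
def Prop1Chores (n m : ℕ) (v : Fin n → Fin m → ℝ) (A : Fin n → Finset (Fin m)) : Prop :=
  ∀ i, A i = ∅ ∨ ∃ e ∈ A i, IsConnBundle (A i \ {e}) ∧
    -(1 / (n : ℝ)) ≤ bundleVal (v i) (A i \ {e})

/-- The hard instance for Chores | Utilitarian | PROP1: with `n ≥ 4`
even agents and `n + 1` chores as described, `OPT_U ≥ -(3n+2)/(n(n+1))`, while every
connected PROP1 allocation has utilitarian welfare at most `-n/(2(n+1)) - (n+2)/n²`. -/
lemma ineqB (N K : ℝ) (hN : 4 ≤ N) (hK : 2*K ≤ N + 2) :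
    -(2*K/N^2) - (N+1-K)/(N+1) ≤ -(N/(2*(N+1))) - (N+2)/N^2 := by
  have hN0 : (0:ℝ) < N := by linarith
  have hN1 : (0:ℝ) < N+1 := by linarith
  rw [← sub_nonneg]
  have h : -(N/(2*(N+1))) - (N+2)/N^2 - (-(2*K/N^2) - (N+1-K)/(N+1))
      = (N+2-2*K)*(N^2-2*N-2) / (2*N^2*(N+1)) := by field_simp; ring
  rw [h]
  exact div_nonneg (mul_nonneg (by linarith) (by nlinarith)) (by positivity)

lemma ineqA (N K : ℝ) (hN : 4 ≤ N) (hK0 : 0 ≤ K) (hK : 2*K ≤ N) :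
    -((N-2)/N) - 2*K/N^2 - (N-K)/(N+1) ≤ -(N/(2*(N+1))) - (N+2)/N^2 := by
  have hN0 : (0:ℝ) < N := by linarith
  have hN1 : (0:ℝ) < N+1 := by linarith
  rw [← sub_nonneg]
  have h : -(N/(2*(N+1))) - (N+2)/N^2 - (-((N-2)/N) - 2*K/N^2 - (N-K)/(N+1))
      = (3*N^3-4*N^2-10*N-4 - 2*K*(N^2-2*N-2)) / (2*N^2*(N+1)) := by field_simp; ring
  rw [h]
  exact div_nonneg (by nlinarith) (by positivity)

theorem chores_utilitarian_prop1_lower_bound (n : ℕ) (hn : 4 ≤ n) (hne : Even n)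
    (v : Fin n → Fin (n + 1) → ℝ)
    (hv1 : ∀ i : Fin n, (i : ℕ) = 0 → ∀ j : Fin (n + 1),
      v i j = if (j : ℕ) < n then -(2 / (n : ℝ) ^ 2) else -(((n : ℝ) - 2) / (n : ℝ)))
    (hv2 : ∀ i : Fin n, (i : ℕ) ≠ 0 → ∀ j : Fin (n + 1),
      v i j = -(1 / ((n : ℝ) + 1))) :
    -((3 * (n : ℝ) + 2) / ((n : ℝ) * ((n : ℝ) + 1))) ≤ optU n (n + 1) v ∧
    ∀ A : Fin n → Finset (Fin (n + 1)), ConnAlloc n (n + 1) A →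
      Prop1Chores n (n + 1) v A →
      utilW n (n + 1) v A ≤ -((n : ℝ) / (2 * ((n : ℝ) + 1))) - ((n : ℝ) + 2) / (n : ℝ) ^ 2 := by
  have hn0 : 0 < n := by omega
  have hNr : (4:ℝ) ≤ (n:ℝ) := by exact_mod_cast hn
  have hNpos : (0:ℝ) < (n:ℝ) := by linarith
  have hN1 : (0:ℝ) < (n:ℝ)+1 := by linarith
  set i0 : Fin n := ⟨0, hn0⟩ with hi0def
  set i1 : Fin n := ⟨1, by omega⟩ with hi1def
  set L : Fin (n+1) := Fin.last n with hLdef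
  have hv0 := hv1 i0 rfl
  have hvL : v i0 L = -(((n:ℝ)-2)/(n:ℝ)) := by
    rw [hv0 L]
    simp [hLdef]
  have hvS : ∀ j : Fin (n+1), j ≠ L → v i0 j = -(2/(n:ℝ)^2) := by
    intro j hj
    rw [hv0 j, if_pos]
    have h2 := j.isLt
    rcases Nat.lt_succ_iff_lt_or_eq.mp h2 with h | h
    · exact h
    · exact absurd (Fin.ext (by simp [hLdef, h])) hj
  have hrep : ∀ e : Fin (n+1), v i0 e
      = -(2/(n:ℝ)^2) + (if e = L then (-(((n:ℝ)-2)/(n:ℝ)) + 2/(n:ℝ)^2) else 0) := by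
    intro e
    by_cases he : e = L
    · subst he; rw [hvL]; simp
    · rw [hvS e he]; simp [he]
  have hsum0 : ∀ S : Finset (Fin (n+1)), bundleVal (v i0) S
      = -(2*(S.card:ℝ)/(n:ℝ)^2)
        + (if L ∈ S then (-(((n:ℝ)-2)/(n:ℝ)) + 2/(n:ℝ)^2) else 0) := by
    intro S
    unfold bundleVal
    rw [Finset.sum_congr rfl (fun e _ => hrep e), Finset.sum_add_distrib,
      Finset.sum_const, Finset.sum_ite_eq' S L, nsmul_eq_mul]
    congr 1
    ring
  have hsumi : ∀ i : Fin n, (i:ℕ) ≠ 0 → ∀ S : Finset (Fin (n+1)),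
      bundleVal (v i) S = -((S.card:ℝ)/((n:ℝ)+1)) := by
    intro i hi S
    unfold bundleVal
    rw [Finset.sum_congr rfl (fun e _ => hv2 i hi e), Finset.sum_const, nsmul_eq_mul]
    ring
  have hvle : ∀ i j, v i j ≤ 0 := by
    intro i j
    by_cases hi : (i:ℕ) = 0
    · rw [hv1 i hi j]
      split_ifs
      · have : (0:ℝ) ≤ 2/(n:ℝ)^2 := by positivity
        linarith
      · have : (0:ℝ) ≤ ((n:ℝ)-2)/(n:ℝ) := div_nonneg (by linarith) (by linarith)
        linarith
    · rw [hv2 i hi j]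
      have : (0:ℝ) ≤ 1/((n:ℝ)+1) := by positivity
      linarith
  have hbdd : BddAbove { x : ℝ | ∃ A, ConnAlloc n (n+1) A ∧ x = utilW n (n+1) v A } := by
    refine ⟨0, ?_⟩
    rintro x ⟨A, hA, rfl⟩
    exact Finset.sum_nonpos (fun i _ => Finset.sum_nonpos (fun j _ => hvle i j))
  constructor
  · -- Part 1
    set B : Fin n → Finset (Fin (n+1)) :=
      fun i => if (i:ℕ) = 0 then ({L} : Finset (Fin (n+1)))ᶜ
        else if (i:ℕ) = 1 then {L} else ∅ with hBdef
    have hBconn : ConnAlloc n (n+1) B := by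
      refine ⟨?_, ?_, ?_⟩
      · intro i a ha c hc b hab hbc
        simp only [hBdef] at *
        split_ifs at * with h1 h2
        · simp only [Finset.mem_compl, Finset.mem_singleton] at *
          intro hb
          subst hb
          exact hc (le_antisymm (Fin.le_last c) hbc)
        · simp only [Finset.mem_singleton] at *
          subst ha; subst hc
          exact le_antisymm hbc hab
        · simp at ha
      · intro i j hij
        simp only [hBdef]
        split_ifs with h1 h2 h3 h4 h5 h6 h7 h8
        all_goals first
          | (exact absurd (Fin.ext (by omega)) hij)
          | exact Finset.disjoint_empty_right _
          | exact Finset.disjoint_empty_left _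
          | exact disjoint_compl_left
          | exact disjoint_compl_right
      · intro e
        by_cases he : e = L
        · exact ⟨i1, by simp [hBdef, hi1def, he]⟩
        · exact ⟨i0, by simp [hBdef, hi0def, he]⟩
    have hne01 : i0 ≠ i1 := by
      intro h
      have := congrArg Fin.val h
      simp [hi0def, hi1def] at this
    have hB0 : B i0 = ({L} : Finset (Fin (n+1)))ᶜ := by simp [hBdef, hi0def]
    have hB1 : B i1 = {L} := by simp [hBdef, hi1def]
    have hsplit : utilW n (n+1) v B = bundleVal (v i0) (B i0) + bundleVal (v i1) (B i1) := by
      unfold utilW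
      rw [← Finset.sum_subset (Finset.subset_univ ({i0, i1} : Finset (Fin n)))
        (fun i _ hi => ?_)]
      · rw [Finset.sum_pair hne01]
      · simp only [Finset.mem_insert, Finset.mem_singleton, not_or] at hi
        have hB : B i = ∅ := by
          simp only [hBdef]
          rw [if_neg, if_neg]
          · intro h; exact hi.2 (Fin.ext (by simp [hi1def, h]))
          · intro h; exact hi.1 (Fin.ext (by simp [hi0def, h]))
        rw [hB]
        simp [bundleVal]
    have hcard : (({L} : Finset (Fin (n+1)))ᶜ).card = n := by
      rw [Finset.card_compl]
      simp
    have hval0 : bundleVal (v i0) (B i0) = -(2*(n:ℝ)/(n:ℝ)^2) := by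
      rw [hB0, hsum0, hcard, if_neg (by simp)]
      ring
    have hval1 : bundleVal (v i1) (B i1) = -(1/((n:ℝ)+1)) := by
      rw [hB1, hsumi i1 (by simp [hi1def]), Finset.card_singleton]
      norm_num
    have hUB : utilW n (n+1) v B = -((3*(n:ℝ)+2)/((n:ℝ)*((n:ℝ)+1))) := by
      rw [hsplit, hval0, hval1]
      field_simp
      ring
    have := le_csSup hbdd ⟨B, hBconn, rfl⟩
    rw [hUB] at this
    exact this
  · -- Part 2
    intro A hA hP
    obtain ⟨hconn, hdisj, hcov⟩ := hA
    have hcardsum : ∑ i, ((A i).card : ℝ) = (n:ℝ) + 1 := by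
      have huniv : Finset.univ.biUnion A = (Finset.univ : Finset (Fin (n+1))) := by
        ext e
        simp only [Finset.mem_biUnion, Finset.mem_univ, iff_true, true_and]
        exact hcov e
      have hcard := congrArg Finset.card huniv
      rw [Finset.card_biUnion (fun i _ j _ hij => hdisj i j hij), Finset.card_univ,
        Fintype.card_fin] at hcard
      exact_mod_cast hcard
    set c0 : ℝ := ((A i0).card : ℝ) with hc0def
    have hc0nn : 0 ≤ c0 := by positivity
    have hsplit : utilW n (n+1) v A
        = bundleVal (v i0) (A i0) - (((n:ℝ)+1) - c0)/((n:ℝ)+1) := by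
      unfold utilW
      rw [← Finset.add_sum_erase _ _ (Finset.mem_univ i0)]
      congr 1
      have hrest : ∀ i ∈ Finset.univ.erase i0,
          bundleVal (v i) (A i) = -(((A i).card:ℝ)/((n:ℝ)+1)) := by
        intro i hi
        apply hsumi
        intro h
        exact (Finset.mem_erase.mp hi).1 (Fin.ext (by simp [hi0def, h]))
      rw [Finset.sum_congr rfl hrest]
      have hsum_erase : ∑ i ∈ Finset.univ.erase i0, ((A i).card : ℝ)
          = ((n:ℝ)+1) - c0 := by
        have := Finset.add_sum_erase Finset.univ (fun i => ((A i).card : ℝ))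
          (Finset.mem_univ i0)
        rw [hcardsum] at this
        linarith [this]
      rw [Finset.sum_neg_distrib, ← Finset.sum_div, hsum_erase]
    by_cases hL : L ∈ A i0
    · -- agent 0 holds the big chore
      rcases hP i0 with hemp | ⟨e, he, _, hval⟩
      · rw [hemp] at hL; simp at hL
      have hcpos : 1 ≤ (A i0).card := Finset.card_pos.mpr ⟨e, he⟩
      have hcarderase : (((A i0 \ {e}).card : ℝ)) = c0 - 1 := by
        rw [Finset.sdiff_singleton_eq_erase, Finset.card_erase_of_mem he,
          Nat.cast_sub hcpos]
        simp [hc0def]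
      by_cases heL : e = L
      · -- removed item is the big chore
        subst heL
        have hnotin : L ∉ A i0 \ {L} := by simp
        rw [hsum0, if_neg hnotin, hcarderase] at hval
        have hK : 2*(c0-1) ≤ (n:ℝ) := by
          rw [add_zero] at hval
          have h2 : 2*(c0-1)/(n:ℝ)^2 ≤ 1/(n:ℝ) := by linarith
          calc 2*(c0-1) = (2*(c0-1)/(n:ℝ)^2) * (n:ℝ)^2 := by field_simp
            _ ≤ (1/(n:ℝ)) * (n:ℝ)^2 := by
                apply mul_le_mul_of_nonneg_right h2 (by positivity)
            _ = (n:ℝ) := by field_simp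
        have hc1 : (1:ℝ) ≤ c0 := by rw [hc0def]; exact_mod_cast hcpos
        rw [hsplit, hsum0, if_pos hL]
        have hfin := ineqA (n:ℝ) (c0-1) hNr (by linarith) hK
        have : -(2*c0/(n:ℝ)^2) + (-(((n:ℝ)-2)/(n:ℝ)) + 2/(n:ℝ)^2)
            - (((n:ℝ)+1) - c0)/((n:ℝ)+1)
            = -(((n:ℝ)-2)/(n:ℝ)) - 2*(c0-1)/(n:ℝ)^2 - ((n:ℝ)-(c0-1))/((n:ℝ)+1) := by
          have : (((n:ℝ)+1) - c0)/((n:ℝ)+1) = (((n:ℝ)) - (c0-1))/((n:ℝ)+1) := by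
            congr 1; ring
          rw [this]
          ring
        rw [this]
        exact hfin
      · -- removed item is small: contradiction with PROP1
        exfalso
        have hLin : L ∈ A i0 \ {e} := by
          simp only [Finset.mem_sdiff, Finset.mem_singleton]
          exact ⟨hL, fun h => heL h.symm⟩
        have hc2 : 2 ≤ (A i0).card := by
          have : ({e, L} : Finset (Fin (n+1))) ⊆ A i0 := by
            intro x hx
            simp only [Finset.mem_insert, Finset.mem_singleton] at hx
            rcases hx with rfl | rfl
            · exact he
            · exact hL
          calc 2 = ({e, L} : Finset (Fin (n+1))).card := by
                rw [Finset.card_pair heL]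
            _ ≤ (A i0).card := Finset.card_le_card this
        have hc2r : (2:ℝ) ≤ c0 := by rw [hc0def]; exact_mod_cast hc2
        rw [hsum0, if_pos hLin, hcarderase] at hval
        -- hval : -(1/n) ≤ -(2(c0-1)/n²) + (-(n-2)/n + 2/n²)
        have h0 : (0:ℝ) ≤ 2*(c0-1)/(n:ℝ)^2 := div_nonneg (by linarith) (by positivity)
        have hstep : ((n:ℝ)*((n:ℝ)-2) - 2)/(n:ℝ)^2 ≤ 1/(n:ℝ) := by
          have heq : ((n:ℝ)*((n:ℝ)-2)-2)/(n:ℝ)^2 = ((n:ℝ)-2)/(n:ℝ) - 2/(n:ℝ)^2 := by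
            field_simp
          rw [heq]; linarith [hval, h0]
        rw [div_le_div_iff₀ (by positivity) hNpos] at hstep
        nlinarith [hstep]
    · -- agent 0 does not hold the big chore
      have hK : 2*c0 ≤ (n:ℝ) + 2 := by
        rcases hP i0 with hemp | ⟨e, he, _, hval⟩
        · rw [hemp] at hc0def
          simp [hc0def] at *
          linarith
        · have hcpos : 1 ≤ (A i0).card := Finset.card_pos.mpr ⟨e, he⟩
          have hc1 : (1:ℝ) ≤ c0 := by rw [hc0def]; exact_mod_cast hcpos
          have hcarderase : (((A i0 \ {e}).card : ℝ)) = c0 - 1 := by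
            rw [Finset.sdiff_singleton_eq_erase, Finset.card_erase_of_mem he,
              Nat.cast_sub hcpos]
            simp [hc0def]
          have hnotin : L ∉ A i0 \ {e} := fun h => hL (Finset.mem_sdiff.mp h).1
          rw [hsum0, if_neg hnotin, hcarderase, add_zero] at hval
          have h2 : 2*(c0-1)/(n:ℝ)^2 ≤ 1/(n:ℝ) := by linarith
          have : 2*(c0-1) ≤ (n:ℝ) := by
            calc 2*(c0-1) = (2*(c0-1)/(n:ℝ)^2) * (n:ℝ)^2 := by field_simp
              _ ≤ (1/(n:ℝ)) * (n:ℝ)^2 := by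
                  apply mul_le_mul_of_nonneg_right h2 (by positivity)
              _ = (n:ℝ) := by field_simp
          linarith
      rw [hsplit, hsum0, if_neg hL, add_zero]
      have hfin := ineqB (n:ℝ) c0 hNr hK
      have : -(2*c0/(n:ℝ)^2) - (((n:ℝ)+1) - c0)/((n:ℝ)+1)
          = -(2*c0/(n:ℝ)^2) - ((n:ℝ)+1-c0)/((n:ℝ)+1) := by ring_nf
      rw [this]
      exact hfin
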